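/- In the free metabelian associative algebra A_2(M), the commutator ideal A_2'(M) (the ideal generated by [v,u]) is a free module over C[u1,v1,u2,v2] with single free generator [v,u], where u1, v1 act by left multiplication by u, v and u2, v2 act by right multiplication by u, v. -/

import Mathlib

open MvPolynomial

/-- The relation whose `RingQuot` is the free metabelian associative algebra. -/
def MetabelianRel (X : Type*) (x y : FreeAlgebra ℂ X) : Prop :=
  (∃ f1 f2 f3 f4 : FreeAlgebra ℂ X,
    x = (f1 * f2 - f2 * f1) * (f3 * f4 - f4 * f3)) ∧ y = 0

/-- The free metabelian associative algebra on two generators over `ℂ`. -/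
abbrev FreeMetabelian2 : Type := RingQuot (MetabelianRel (Fin 2))

noncomputable def Ugen : FreeMetabelian2 :=
  RingQuot.mkAlgHom ℂ (MetabelianRel (Fin 2)) (FreeAlgebra.ι ℂ 0)

noncomputable def Vgen : FreeMetabelian2 :=
  RingQuot.mkAlgHom ℂ (MetabelianRel (Fin 2)) (FreeAlgebra.ι ℂ 1)

-- L1
lemma comm_mul_comm (a b c d : FreeMetabelian2) :
    (a * b - b * a) * (c * d - d * c) = 0 := by
  obtain ⟨f1, rfl⟩ := RingQuot.mkAlgHom_surjective ℂ (MetabelianRel (Fin 2)) a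
  obtain ⟨f2, rfl⟩ := RingQuot.mkAlgHom_surjective ℂ (MetabelianRel (Fin 2)) b
  obtain ⟨f3, rfl⟩ := RingQuot.mkAlgHom_surjective ℂ (MetabelianRel (Fin 2)) c
  obtain ⟨f4, rfl⟩ := RingQuot.mkAlgHom_surjective ℂ (MetabelianRel (Fin 2)) d
  have h : RingQuot.mkAlgHom ℂ (MetabelianRel (Fin 2))
      ((f1 * f2 - f2 * f1) * (f3 * f4 - f4 * f3)) =
      RingQuot.mkAlgHom ℂ (MetabelianRel (Fin 2)) 0 :=
    RingQuot.mkAlgHom_rel ℂ ⟨⟨f1, f2, f3, f4, rfl⟩, rfl⟩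
  simpa [map_mul, map_sub] using h

noncomputable abbrev Tcomm : FreeMetabelian2 := Vgen * Ugen - Ugen * Vgen

lemma comm_mul_t (a b : FreeMetabelian2) : (a * b - b * a) * Tcomm = 0 :=
  comm_mul_comm a b Vgen Ugen

lemma t_mul_comm (a b : FreeMetabelian2) : Tcomm * (a * b - b * a) = 0 :=
  comm_mul_comm Vgen Ugen a b

lemma t_mul_mid_comm (x a b : FreeMetabelian2) : Tcomm * x * (a * b - b * a) = 0 := by
  have h1 := t_mul_comm (x * a) b
  have h2 := t_mul_comm x b
  simp only [mul_sub, sub_eq_zero, ← mul_assoc] at h1 h2 ⊢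
  rw [h1]
  exact congrArg (fun z => z * a) h2.symm

noncomputable def word (m : Fin 4 →₀ ℕ) : FreeMetabelian2 :=
  Ugen ^ m 0 * Vgen ^ m 1 * Tcomm * Ugen ^ m 2 * Vgen ^ m 3

noncomputable def Phi : MvPolynomial (Fin 4) ℂ →ₗ[ℂ] FreeMetabelian2 :=
  (MvPolynomial.basisMonomials (Fin 4) ℂ).constr ℂ word

lemma Phi_monomial (m : Fin 4 →₀ ℕ) (a : ℂ) : Phi (monomial m a) = a • word m := by
  have h1 : (monomial m a : MvPolynomial (Fin 4) ℂ) = a • monomial m 1 := by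
    simp [smul_monomial]
  have h2 : (monomial m (1:ℂ)) = MvPolynomial.basisMonomials (Fin 4) ℂ m := by
    rw [coe_basisMonomials]
  rw [h1, map_smul]
  unfold Phi
  rw [h2, Module.Basis.constr_basis]

lemma Phi_one : Phi 1 = Tcomm := by
  have : (1 : MvPolynomial (Fin 4) ℂ) = monomial 0 1 := by
    simp [monomial_zero']
  rw [this, Phi_monomial, one_smul, word]
  simp

lemma Phi_X0_mul (p : MvPolynomial (Fin 4) ℂ) : Phi (X 0 * p) = Ugen * Phi p := by
  induction p using MvPolynomial.induction_on' with
  | add p q hp hq => rw [mul_add, map_add, map_add, hp, hq, mul_add]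
  | monomial m a =>
    rw [X, monomial_mul, one_mul, Phi_monomial, Phi_monomial, mul_smul_comm]
    congr 1
    unfold word
    simp only [Finsupp.add_apply, Finsupp.single_apply]
    norm_num [Fin.ext_iff]
    rw [add_comm (1 : ℕ), pow_succ']
    simp only [mul_assoc]

lemma Phi_X1_mul (p : MvPolynomial (Fin 4) ℂ) : Phi (X 1 * p) = Vgen * Phi p := by
  induction p using MvPolynomial.induction_on' with
  | add p q hp hq => rw [mul_add, map_add, map_add, hp, hq, mul_add]
  | monomial m a =>
    rw [X, monomial_mul, one_mul, Phi_monomial, Phi_monomial, mul_smul_comm]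
    congr 1
    unfold word
    simp only [Finsupp.add_apply, Finsupp.single_apply]
    norm_num [Fin.ext_iff]
    rw [add_comm 1 (m 1)]
    have h := comm_mul_t Vgen (Ugen ^ m 0 * Vgen ^ m 1)
    rw [sub_mul, sub_eq_zero] at h
    have h2 := congrArg (· * (Ugen ^ m 2 * Vgen ^ m 3)) h
    simp only [pow_succ, mul_assoc] at h2 ⊢
    exact h2.symm

lemma Phi_X2_mul (p : MvPolynomial (Fin 4) ℂ) : Phi (X 2 * p) = Phi p * Ugen := by
  induction p using MvPolynomial.induction_on' with
  | add p q hp hq => rw [mul_add, map_add, map_add, hp, hq, add_mul]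
  | monomial m a =>
    rw [X, monomial_mul, one_mul, Phi_monomial, Phi_monomial, smul_mul_assoc]
    congr 1
    unfold word
    simp only [Finsupp.add_apply, Finsupp.single_apply]
    norm_num [Fin.ext_iff]
    rw [add_comm 1 (m 2)]
    have h := t_mul_mid_comm (Ugen ^ m 2) (Vgen ^ m 3) Ugen
    rw [mul_sub, sub_eq_zero] at h
    simp only [pow_succ, mul_assoc] at h ⊢
    rw [← h]

lemma Phi_X3_mul (p : MvPolynomial (Fin 4) ℂ) : Phi (X 3 * p) = Phi p * Vgen := by
  induction p using MvPolynomial.induction_on' with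
  | add p q hp hq => rw [mul_add, map_add, map_add, hp, hq, add_mul]
  | monomial m a =>
    rw [X, monomial_mul, one_mul, Phi_monomial, Phi_monomial, smul_mul_assoc]
    congr 1
    unfold word
    simp only [Finsupp.add_apply, Finsupp.single_apply]
    norm_num [Fin.ext_iff]
    rw [add_comm 1 (m 3), pow_succ]
    simp only [mul_assoc]

noncomputable abbrev Rpoly : Type := MvPolynomial (Fin 4) ℂ
noncomputable abbrev MatR : Type := Matrix (Fin 2) (Fin 2) Rpoly

noncomputable def Mu : MatR := !![X 0, 0; 0, X 2]
noncomputable def Mv : MatR := !![X 1, 1; 0, X 3]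

noncomputable def phi0 : FreeAlgebra ℂ (Fin 2) →ₐ[ℂ] MatR :=
  FreeAlgebra.lift ℂ ![Mu, Mv]

lemma phi0_lower (f : FreeAlgebra ℂ (Fin 2)) : phi0 f 1 0 = 0 := by
  induction f using FreeAlgebra.induction with
  | grade0 c =>
    rw [AlgHom.commutes]
    simp [Matrix.algebraMap_matrix_apply]
  | grade1 i =>
    have : phi0 (FreeAlgebra.ι ℂ i) = ![Mu, Mv] i := FreeAlgebra.lift_ι_apply _ _
    rw [this]
    fin_cases i <;> simp [Mu, Mv]
  | mul f g hf hg =>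
    rw [map_mul]
    rw [Matrix.mul_apply, Fin.sum_univ_two, hf, hg]
    simp
  | add f g hf hg => rw [map_add, Matrix.add_apply, hf, hg, add_zero]

lemma triangular_rel (A B C D : MatR) (hA : A 1 0 = 0) (hB : B 1 0 = 0)
    (hC : C 1 0 = 0) (hD : D 1 0 = 0) : (A * B - B * A) * (C * D - D * C) = 0 := by
  have hE : ∀ i, (A * B - B * A) i 0 = 0 := by
    intro i
    fin_cases i <;>
      simp only [Fin.mk_zero, Fin.mk_one, Matrix.sub_apply, Matrix.mul_apply, Fin.sum_univ_two, hA, hB] <;> ring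
  have hF : ∀ j, (C * D - D * C) 1 j = 0 := by
    intro j
    fin_cases j <;>
      simp only [Fin.mk_zero, Fin.mk_one, Matrix.sub_apply, Matrix.mul_apply, Fin.sum_univ_two, hC, hD] <;> ring
  ext i j
  rw [Matrix.mul_apply, Fin.sum_univ_two, hE, hF]
  simp

noncomputable def psi : FreeMetabelian2 →ₐ[ℂ] MatR :=
  RingQuot.liftAlgHom ℂ ⟨phi0, by
    rintro x y ⟨⟨f1, f2, f3, f4, rfl⟩, rfl⟩
    simp only [map_mul, map_sub, map_zero]
    exact triangular_rel _ _ _ _ (phi0_lower f1) (phi0_lower f2)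
      (phi0_lower f3) (phi0_lower f4)⟩

lemma psi_U : psi Ugen = Mu := by
  rw [Ugen, psi, RingQuot.liftAlgHom_mkAlgHom_apply]
  exact FreeAlgebra.lift_ι_apply _ _

lemma psi_V : psi Vgen = Mv := by
  rw [Vgen, psi, RingQuot.liftAlgHom_mkAlgHom_apply]
  exact FreeAlgebra.lift_ι_apply _ _

noncomputable def Smat (g : Rpoly) : MatR := !![0, g; 0, 0]

lemma Mu_mul_S (g : Rpoly) : Mu * Smat g = Smat (X 0 * g) := by
  unfold Mu Smat
  ext i j
  fin_cases i <;> fin_cases j <;> simp [Matrix.mul_apply, Fin.sum_univ_two]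

lemma Mv_mul_S (g : Rpoly) : Mv * Smat g = Smat (X 1 * g) := by
  unfold Mv Smat
  ext i j
  fin_cases i <;> fin_cases j <;> simp [Matrix.mul_apply, Fin.sum_univ_two]

lemma S_mul_Mu (g : Rpoly) : Smat g * Mu = Smat (g * X 2) := by
  unfold Mu Smat
  ext i j
  fin_cases i <;> fin_cases j <;> simp [Matrix.mul_apply, Fin.sum_univ_two]

lemma S_mul_Mv (g : Rpoly) : Smat g * Mv = Smat (g * X 3) := by
  unfold Mv Smat
  ext i j
  fin_cases i <;> fin_cases j <;> simp [Matrix.mul_apply, Fin.sum_univ_two]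

lemma smul_S (c : ℂ) (g : Rpoly) : c • Smat g = Smat (c • g) := by
  unfold Smat
  ext i j
  fin_cases i <;> fin_cases j <;> simp

lemma psi_T : psi Tcomm = Smat (X 2 - X 0) := by
  rw [map_sub, map_mul, map_mul, psi_U, psi_V]
  unfold Mu Mv Smat
  ext i j
  fin_cases i <;> fin_cases j <;>
    simp [Matrix.mul_apply, Fin.sum_univ_two] <;> ring

lemma Smat_add (g h : Rpoly) : Smat g + Smat h = Smat (g + h) := by
  unfold Smat
  ext i j
  fin_cases i <;> fin_cases j <;> simp

lemma psi_Phi (p : Rpoly) : psi (Phi p) = Smat ((X 2 - X 0) * p) := by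
  induction p using MvPolynomial.induction_on with
  | C a =>
    rw [show (C a : Rpoly) = a • 1 by rw [MvPolynomial.smul_eq_C_mul, mul_one],
      map_smul, Phi_one, map_smul, psi_T, smul_S]
    congr 1
    simp [MvPolynomial.smul_eq_C_mul]
    ring
  | add p q hp hq => rw [map_add, map_add, hp, hq, Smat_add]; congr 1; ring
  | mul_X p n hp =>
    fin_cases n
    · show psi (Phi (p * X 0)) = Smat ((X 2 - X 0) * (p * X 0))
      rw [mul_comm, Phi_X0_mul, map_mul, psi_U, hp, Mu_mul_S]; congr 1; ring
    · show psi (Phi (p * X 1)) = Smat ((X 2 - X 0) * (p * X 1))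
      rw [mul_comm, Phi_X1_mul, map_mul, psi_V, hp, Mv_mul_S]; congr 1; ring
    · show psi (Phi (p * X 2)) = Smat ((X 2 - X 0) * (p * X 2))
      rw [mul_comm, Phi_X2_mul, map_mul, psi_U, hp, S_mul_Mu]; congr 1; ring
    · show psi (Phi (p * X 3)) = Smat ((X 2 - X 0) * (p * X 3))
      rw [mul_comm, Phi_X3_mul, map_mul, psi_V, hp, S_mul_Mv]; congr 1; ring

lemma Phi_inj : Function.Injective Phi := by
  intro p q h
  have h2 : psi (Phi (p - q)) = 0 := by rw [map_sub, h, sub_self, map_zero]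
  rw [psi_Phi] at h2
  have h3 : (X 2 - X 0 : Rpoly) * (p - q) = 0 := by
    have := congrFun (congrFun (congrArg (fun M : MatR => (M : _)) h2) 0) 1
    simpa [Smat] using this
  have hne : (X 2 - X 0 : Rpoly) ≠ 0 := by
    refine sub_ne_zero.mpr fun h => ?_
    have := MvPolynomial.X_injective h
    exact absurd this (by decide)
  rcases mul_eq_zero.mp h3 with h4 | h4
  · exact absurd h4 hne
  · exact sub_eq_zero.mp h4

lemma left_closed (f : FreeAlgebra ℂ (Fin 2)) :
    ∀ x ∈ LinearMap.range Phi,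
      RingQuot.mkAlgHom ℂ (MetabelianRel (Fin 2)) f * x ∈ LinearMap.range Phi := by
  induction f using FreeAlgebra.induction with
  | grade0 c =>
    intro x hx
    rw [AlgHom.commutes, ← Algebra.smul_def]
    exact Submodule.smul_mem _ c hx
  | grade1 i =>
    intro x hx
    obtain ⟨p, rfl⟩ := hx
    fin_cases i
    · exact ⟨X 0 * p, Phi_X0_mul p⟩
    · exact ⟨X 1 * p, Phi_X1_mul p⟩
  | mul f g hf hg =>
    intro x hx
    rw [map_mul, mul_assoc]
    exact hf _ (hg x hx)
  | add f g hf hg =>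
    intro x hx
    rw [map_add, add_mul]
    exact Submodule.add_mem _ (hf x hx) (hg x hx)

lemma right_closed (f : FreeAlgebra ℂ (Fin 2)) :
    ∀ x ∈ LinearMap.range Phi,
      x * RingQuot.mkAlgHom ℂ (MetabelianRel (Fin 2)) f ∈ LinearMap.range Phi := by
  induction f using FreeAlgebra.induction with
  | grade0 c =>
    intro x hx
    rw [AlgHom.commutes, Algebra.algebraMap_eq_smul_one, mul_smul_comm, mul_one]
    exact Submodule.smul_mem _ c hx
  | grade1 i =>
    intro x hx
    obtain ⟨p, rfl⟩ := hx
    fin_cases i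
    · exact ⟨X 2 * p, Phi_X2_mul p⟩
    · exact ⟨X 3 * p, Phi_X3_mul p⟩
  | mul f g hf hg =>
    intro x hx
    rw [map_mul, ← mul_assoc]
    exact hg _ (hf x hx)
  | add f g hf hg =>
    intro x hx
    rw [map_add, mul_add]
    exact Submodule.add_mem _ (hf x hx) (hg x hx)

lemma Phi_range : LinearMap.range Phi =
    Submodule.span ℂ
      {x : FreeMetabelian2 | ∃ a b : FreeMetabelian2,
        x = a * (Vgen * Ugen - Ugen * Vgen) * b} := by
  apply le_antisymm
  · rintro x ⟨p, rfl⟩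
    induction p using MvPolynomial.induction_on' with
    | monomial m a =>
      rw [Phi_monomial]
      refine Submodule.smul_mem _ a (Submodule.subset_span ?_)
      refine ⟨Ugen ^ m 0 * Vgen ^ m 1, Ugen ^ m 2 * Vgen ^ m 3, ?_⟩
      unfold word
      simp only [mul_assoc]
    | add p q hp hq =>
      rw [map_add]
      exact Submodule.add_mem _ hp hq
  · rw [Submodule.span_le]
    rintro x ⟨a, b, rfl⟩
    have ht : Tcomm ∈ LinearMap.range Phi := ⟨1, Phi_one⟩
    obtain ⟨fa, rfl⟩ := RingQuot.mkAlgHom_surjective ℂ (MetabelianRel (Fin 2)) a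
    obtain ⟨fb, rfl⟩ := RingQuot.mkAlgHom_surjective ℂ (MetabelianRel (Fin 2)) b
    exact right_closed fb _ (left_closed fa _ ht)

/-- The commutator ideal of the free metabelian algebra `A₂(𝔐)` is a free
`ℂ[u₁,v₁,u₂,v₂]`-module with free generator `[v,u]`, where `u₁,v₁` act by left
multiplication by `u,v` and `u₂,v₂` by right multiplication: there is an
injective `ℂ`-linear map `Φ : ℂ[u₁,v₁,u₂,v₂] → A₂(𝔐)` with `Φ(1) = [v,u]`,
intertwining multiplication by the variables with the four multiplications,
whose range is the two-sided ideal generated by `[v,u]`. -/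
theorem commutator_ideal_free_module :
    ∃ Φ : MvPolynomial (Fin 4) ℂ →ₗ[ℂ] FreeMetabelian2,
      Function.Injective Φ ∧
      Φ 1 = Vgen * Ugen - Ugen * Vgen ∧
      (∀ p, Φ (X 0 * p) = Ugen * Φ p) ∧
      (∀ p, Φ (X 1 * p) = Vgen * Φ p) ∧
      (∀ p, Φ (X 2 * p) = Φ p * Ugen) ∧
      (∀ p, Φ (X 3 * p) = Φ p * Vgen) ∧
      LinearMap.range Φ =
        Submodule.span ℂ
          {x : FreeMetabelian2 | ∃ a b : FreeMetabelian2,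
            x = a * (Vgen * Ugen - Ugen * Vgen) * b} :=
  ⟨Phi, Phi_inj, Phi_one, Phi_X0_mul, Phi_X1_mul, Phi_X2_mul, Phi_X3_mul, Phi_range⟩
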